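/- Let p(x) = (x₈ − ‖x'‖²)² + x₈⁴ on ℝ⁸, where x = (x', x₈) ∈ ℝ⁷ × ℝ. Then p is elliptic of order 4 in the sense that its principal (degree 4) part p₄(x) = ‖x'‖⁴ + x₈⁴ satisfies p₄(x) ≥ c|x|⁴, p(x) > 0 for x ≠ 0, yet 1/p is NOT in L²(B₁), i.e. ∫_{|x|≤1} p(x)^{−2} dx = ∞. -/

import Mathlib

open MeasureTheory Set Metric ENNReal

private lemma volE_aux (ε : ℝ) (hε0 : 0 < ε) :
    volume {x : EuclideanSpace ℝ (Fin 8) |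
      (∀ i : Fin 7, x i.castSucc ∈ Ioo ε (2*ε)) ∧
      x 7 ∈ Ioo (∑ i : Fin 7, (x i.castSucc)^2) ((∑ i : Fin 7, (x i.castSucc)^2) + ε^4)}
    = ENNReal.ofReal (ε ^ 11) := by
  set E₁ : Set (Fin 8 → ℝ) := {y : Fin 8 → ℝ |
      (∀ i : Fin 7, y i.castSucc ∈ Ioo ε (2*ε)) ∧
      y 7 ∈ Ioo (∑ i : Fin 7, (y i.castSucc)^2) ((∑ i : Fin 7, (y i.castSucc)^2) + ε^4)} with hE₁def
  have hev : ∀ i : Fin 8, Measurable (fun y : Fin 8 → ℝ => y i) := fun i => measurable_pi_apply i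
  have hQ : Measurable (fun y : Fin 8 → ℝ => ∑ i : Fin 7, (y i.castSucc)^2) :=
    Finset.measurable_sum _ fun i _ => ((hev _).pow_const 2)
  have hE₁ : MeasurableSet E₁ := by
    have : E₁ = (⋂ i : Fin 7, (fun y : Fin 8 → ℝ => y i.castSucc) ⁻¹' (Ioo ε (2*ε))) ∩
        ({y : Fin 8 → ℝ | ∑ i : Fin 7, (y i.castSucc)^2 < y 7} ∩
         {y : Fin 8 → ℝ | y 7 < (∑ i : Fin 7, (y i.castSucc)^2) + ε^4}) := by
      ext y; simp [hE₁def, Set.mem_iInter, and_assoc]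
    rw [this]
    exact MeasurableSet.inter (MeasurableSet.iInter fun i => (hev _) measurableSet_Ioo)
      ((measurableSet_lt hQ (hev 7)).inter (measurableSet_lt (hev 7) (hQ.add_const _)))
  -- transfer to the pi space
  have h1 : volume {x : EuclideanSpace ℝ (Fin 8) |
      (∀ i : Fin 7, x i.castSucc ∈ Ioo ε (2*ε)) ∧
      x 7 ∈ Ioo (∑ i : Fin 7, (x i.castSucc)^2) ((∑ i : Fin 7, (x i.castSucc)^2) + ε^4)}
      = volume E₁ := by
    have := (EuclideanSpace.volume_preserving_symm_measurableEquiv_toLp (Fin 8)).measure_preimage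
      hE₁.nullMeasurableSet
    rw [← this]
    rfl
  rw [h1]
  -- transfer to ℝ × (Fin 7 → ℝ)
  set e2 := MeasurableEquiv.piFinSuccAbove (fun _ : Fin 8 => ℝ) 7 with he2
  have hmp : MeasurePreserving e2.symm
      ((volume : Measure ℝ).prod (volume : Measure (Fin 7 → ℝ))) (volume : Measure (Fin 8 → ℝ)) := by
    have := (measurePreserving_piFinSuccAbove (fun _ : Fin 8 => (volume : Measure ℝ)) 7).symm
    exact this
  have hA : ∀ (t : ℝ) (z : Fin 7 → ℝ), (e2.symm (t, z)) (7 : Fin 8) = t := by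
    intro t z
    simp only [he2, MeasurableEquiv.piFinSuccAbove, MeasurableEquiv.symm_mk,
      MeasurableEquiv.coe_mk, Equiv.symm_symm, Fin.insertNthEquiv, Equiv.coe_fn_mk]
    have h7 : (7 : Fin 8) = Fin.last 7 := rfl
    rw [h7]; exact Fin.insertNth_apply_same _ _ _
  have hB : ∀ (t : ℝ) (z : Fin 7 → ℝ) (j : Fin 7), (e2.symm (t, z)) j.castSucc = z j := by
    intro t z j
    simp only [he2, MeasurableEquiv.piFinSuccAbove, MeasurableEquiv.symm_mk,
      MeasurableEquiv.coe_mk, Equiv.symm_symm, Fin.insertNthEquiv, Equiv.coe_fn_mk]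
    have h7 : (7 : Fin 8) = Fin.last 7 := rfl
    rw [h7, ← Fin.succAbove_last]
    exact Fin.insertNth_apply_succAbove _ _ _ _
  set S : Set (ℝ × (Fin 7 → ℝ)) := {p : ℝ × (Fin 7 → ℝ) |
      (∀ i : Fin 7, p.2 i ∈ Ioo ε (2*ε)) ∧
      p.1 ∈ Ioo (∑ i : Fin 7, (p.2 i)^2) ((∑ i : Fin 7, (p.2 i)^2) + ε^4)} with hSdef
  have hset : e2.symm ⁻¹' E₁ = S := by
    ext ⟨t, z⟩
    simp only [hE₁def, hSdef, Set.mem_preimage, Set.mem_setOf_eq, hA, hB]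
  have h2 : volume E₁ = ((volume : Measure ℝ).prod (volume : Measure (Fin 7 → ℝ))) S := by
    rw [← hmp.measure_preimage hE₁.nullMeasurableSet, hset]
  rw [h2]
  -- Fubini slice computation
  have hevz : ∀ i : Fin 7, Measurable (fun z : Fin 7 → ℝ => z i) := fun i => measurable_pi_apply i
  have hQz : Measurable (fun z : Fin 7 → ℝ => ∑ i : Fin 7, (z i)^2) :=
    Finset.measurable_sum _ fun i _ => ((hevz _).pow_const 2)
  have hS : MeasurableSet S := by
    have : S = ((fun p : ℝ × (Fin 7 → ℝ) => p.2) ⁻¹' (Set.pi univ fun _ : Fin 7 => Ioo ε (2*ε))) ∩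
        ({p : ℝ × (Fin 7 → ℝ) | ∑ i : Fin 7, (p.2 i)^2 < p.1} ∩
         {p : ℝ × (Fin 7 → ℝ) | p.1 < (∑ i : Fin 7, (p.2 i)^2) + ε^4}) := by
      ext ⟨t, z⟩; simp [hSdef, Set.mem_univ_pi, and_assoc]
    rw [this]
    exact MeasurableSet.inter
      (measurable_snd (MeasurableSet.univ_pi fun _ => measurableSet_Ioo))
      ((measurableSet_lt (hQz.comp measurable_snd) measurable_fst).inter
        (measurableSet_lt measurable_fst ((hQz.comp measurable_snd).add_const _)))
  rw [Measure.prod_apply_symm hS]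
  have hbox : MeasurableSet (Set.pi univ fun _ : Fin 7 => Ioo ε (2*ε)) :=
    MeasurableSet.univ_pi fun _ => measurableSet_Ioo
  have hslice : ∀ z : Fin 7 → ℝ, volume ((fun t => (t, z)) ⁻¹' S)
      = Set.indicator (Set.pi univ fun _ : Fin 7 => Ioo ε (2*ε))
          (fun _ => ENNReal.ofReal (ε^4)) z := by
    intro z
    by_cases hz : ∀ i : Fin 7, z i ∈ Ioo ε (2*ε)
    · have hz' : z ∈ Set.pi univ fun _ : Fin 7 => Ioo ε (2*ε) := by
        simpa [Set.mem_univ_pi] using hz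
      have hpre : (fun t => (t, z)) ⁻¹' S
          = Ioo (∑ i : Fin 7, (z i)^2) ((∑ i : Fin 7, (z i)^2) + ε^4) := by
        ext t
        simp only [Set.mem_preimage, hSdef, Set.mem_setOf_eq]
        exact ⟨fun h => h.2, fun h => ⟨hz, h⟩⟩
      rw [hpre, Real.volume_Ioo, Set.indicator_of_mem hz']
      congr 1; ring
    · have hz' : z ∉ Set.pi univ fun _ : Fin 7 => Ioo ε (2*ε) := by
        simpa [Set.mem_univ_pi] using hz
      have hpre : (fun t => (t, z)) ⁻¹' S = ∅ := by
        ext t; simp [hSdef]; intro h; exact absurd h hz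
      rw [hpre, Set.indicator_of_notMem hz']
      simp
  rw [lintegral_congr hslice, lintegral_indicator hbox, setLIntegral_const]
  have hvbox : volume (Set.pi univ fun _ : Fin 7 => Ioo ε (2*ε)) = ENNReal.ofReal ε ^ 7 := by
    have h2e : 2*ε - ε = ε := by ring
    rw [volume_pi_pi]
    simp [Real.volume_Ioo, h2e, Finset.prod_const]
  rw [hvbox, ← ENNReal.ofReal_pow hε0.le, ← ENNReal.ofReal_mul (by positivity)]
  congr 1; ring

private lemma lower_aux (ε : ℝ) (hε0 : 0 < ε) (hεle : ε ≤ 1/100) :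
    ENNReal.ofReal (1 / (10^12 * ε^5)) ≤
    ∫⁻ x in ball (0 : EuclideanSpace ℝ (Fin 8)) 1,
        ENNReal.ofReal
          (1 / ((x 7 - ∑ i : Fin 7, (x i.castSucc) ^ 2) ^ 2 + (x 7) ^ 4) ^ 2) := by
  set f : EuclideanSpace ℝ (Fin 8) → ℝ≥0∞ := fun x => ENNReal.ofReal
      (1 / ((x 7 - ∑ i : Fin 7, (x i.castSucc) ^ 2) ^ 2 + (x 7) ^ 4) ^ 2) with hf
  set E : Set (EuclideanSpace ℝ (Fin 8)) := {x : EuclideanSpace ℝ (Fin 8) |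
      (∀ i : Fin 7, x i.castSucc ∈ Ioo ε (2*ε)) ∧
      x 7 ∈ Ioo (∑ i : Fin 7, (x i.castSucc)^2) ((∑ i : Fin 7, (x i.castSucc)^2) + ε^4)} with hEdef
  have hev : ∀ i : Fin 8, Measurable (fun x : EuclideanSpace ℝ (Fin 8) => x i) :=
    fun i => (measurable_pi_apply i).comp (WithLp.measurable_ofLp 2 _)
  have hQ : Measurable (fun x : EuclideanSpace ℝ (Fin 8) => ∑ i : Fin 7, (x i.castSucc)^2) :=
    Finset.measurable_sum _ fun i _ => ((hev _).pow_const 2)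
  have hfm : Measurable f := by
    apply Measurable.ennreal_ofReal
    have hden : Measurable fun x : EuclideanSpace ℝ (Fin 8) =>
        ((x 7 - ∑ i : Fin 7, (x i.castSucc)^2)^2 + (x 7)^4)^2 :=
      Measurable.pow_const (((((hev 7).sub hQ).pow_const 2)).add ((hev 7).pow_const 4)) 2
    exact measurable_const.div hden
  have hE : MeasurableSet E := by
    have : E = (⋂ i : Fin 7, (fun x : EuclideanSpace ℝ (Fin 8) => x i.castSucc) ⁻¹' (Ioo ε (2*ε))) ∩
        ({x : EuclideanSpace ℝ (Fin 8) | ∑ i : Fin 7, (x i.castSucc)^2 < x 7} ∩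
         {x : EuclideanSpace ℝ (Fin 8) | x 7 < (∑ i : Fin 7, (x i.castSucc)^2) + ε^4}) := by
      ext x; simp [hEdef, Set.mem_iInter, and_assoc]
    rw [this]
    exact MeasurableSet.inter (MeasurableSet.iInter fun i => (hev _) measurableSet_Ioo)
      ((measurableSet_lt hQ (hev 7)).inter (measurableSet_lt (hev 7) (hQ.add_const _)))
  -- basic facts about points of E
  have hε1 : ε^2 ≤ 1 := by nlinarith
  have hεsq : ε^4 ≤ ε^2 := by nlinarith [sq_nonneg ε, hε1]
  have hfacts : ∀ x ∈ E, 7*ε^2 ≤ (∑ i : Fin 7, (x i.castSucc)^2) ∧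
      (∑ i : Fin 7, (x i.castSucc)^2) ≤ 28*ε^2 ∧
      (∑ i : Fin 7, (x i.castSucc)^2) < x 7 ∧ x 7 < (∑ i : Fin 7, (x i.castSucc)^2) + ε^4 := by
    intro x hx
    obtain ⟨h1, h2⟩ := hx
    refine ⟨?_, ?_, h2.1, h2.2⟩
    · calc (7:ℝ)*ε^2 = ∑ _i : Fin 7, ε^2 := by
            simp [Finset.sum_const, nsmul_eq_mul]
        _ ≤ _ := Finset.sum_le_sum fun i _ => by nlinarith [(h1 i).1, (h1 i).2, hε0]
    · calc (∑ i : Fin 7, (x i.castSucc)^2) ≤ ∑ _i : Fin 7, 4*ε^2 :=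
            Finset.sum_le_sum fun i _ => by nlinarith [(h1 i).1, (h1 i).2, hε0]
        _ = 28*ε^2 := by simp [Finset.sum_const, nsmul_eq_mul]; ring
  -- E is inside the unit ball
  have hEball : E ⊆ ball (0 : EuclideanSpace ℝ (Fin 8)) 1 := by
    intro x hx
    obtain ⟨hsl, hsu, hts, htu⟩ := hfacts x hx
    rw [mem_ball_zero_iff]
    have hnorm : ‖x‖ ^ 2 = ∑ i : Fin 8, x i ^ 2 := by
      rw [EuclideanSpace.norm_eq, Real.sq_sqrt (by positivity)]
      simp [Real.norm_eq_abs, sq_abs]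
    have hsplit : (∑ i : Fin 8, x i ^ 2)
        = (∑ i : Fin 7, (x i.castSucc)^2) + (x 7)^2 := by
      rw [Fin.sum_univ_castSucc]
      rfl
    have ht0 : 0 < x 7 := lt_of_le_of_lt (by positivity) hts
    have htub : x 7 ≤ 29 * ε^2 := by nlinarith
    have : ‖x‖^2 < 1 := by
      rw [hnorm, hsplit]
      nlinarith [hε0, hεle]
    nlinarith [norm_nonneg x]
  -- the pointwise lower bound on E
  have hpoint : ∀ x ∈ E, ENNReal.ofReal (1 / (10^12 * ε^16)) ≤ f x := by
    intro x hx
    obtain ⟨hsl, hsu, hts, htu⟩ := hfacts x hx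
    set s := ∑ i : Fin 7, (x i.castSucc)^2
    set t := x 7
    have ht0 : 0 < t := lt_of_le_of_lt (by positivity) hts
    have htub : t ≤ 29 * ε^2 := by nlinarith
    have hp1 : (t - s)^2 ≤ ε^8 := by nlinarith
    have hp2 : t^4 ≤ 707281 * ε^8 := by nlinarith [pow_le_pow_left₀ ht0.le htub 4]
    have hppos : 0 < (t - s)^2 + t^4 := by positivity
    have hpu : (t - s)^2 + t^4 ≤ 10^6 * ε^8 := by nlinarith
    have hp2u : ((t - s)^2 + t^4)^2 ≤ 10^12 * ε^16 := by nlinarith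
    apply ENNReal.ofReal_le_ofReal
    apply one_div_le_one_div_of_le (by positivity) hp2u
  -- put everything together
  calc ENNReal.ofReal (1 / (10^12 * ε^5))
      = ENNReal.ofReal (1 / (10^12 * ε^16)) * ENNReal.ofReal (ε^11) := by
        rw [← ENNReal.ofReal_mul (by positivity)]
        congr 1
        field_simp
    _ = ENNReal.ofReal (1 / (10^12 * ε^16)) * volume E := by rw [volE_aux ε hε0]
    _ = ∫⁻ _x in E, ENNReal.ofReal (1 / (10^12 * ε^16)) := (setLIntegral_const _ _).symm
    _ ≤ ∫⁻ x in E, f x := setLIntegral_mono hfm hpoint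
    _ ≤ ∫⁻ x in ball (0 : EuclideanSpace ℝ (Fin 8)) 1, f x := lintegral_mono_set hEball

/-- The quartic polynomial `p(x) = (x₈ − ‖x'‖²)² + x₈⁴` on `ℝ⁸` is elliptic
(its principal part `‖x'‖⁴ + x₈⁴` satisfies `p₄(x) ≥ c|x|⁴`) and positive away
from `0`, yet `1/p ∉ L²(B₁)`: `∫_{|x|≤1} p(x)^{−2} dx = ∞`. -/
theorem stmt_10 :
    (∃ c : ℝ, 0 < c ∧ ∀ x : EuclideanSpace ℝ (Fin 8),
        c * ‖x‖ ^ 4 ≤ (∑ i : Fin 7, (x i.castSucc) ^ 2) ^ 2 + (x 7) ^ 4) ∧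
    (∀ x : EuclideanSpace ℝ (Fin 8), x ≠ 0 →
        0 < (x 7 - ∑ i : Fin 7, (x i.castSucc) ^ 2) ^ 2 + (x 7) ^ 4) ∧
    (∫⁻ x in ball (0 : EuclideanSpace ℝ (Fin 8)) 1,
        ENNReal.ofReal
          (1 / ((x 7 - ∑ i : Fin 7, (x i.castSucc) ^ 2) ^ 2 + (x 7) ^ 4) ^ 2))
      = ⊤ := by
  refine ⟨⟨1/2, by norm_num, fun x => ?_⟩, fun x hx => ?_, ?_⟩
  · have hnorm : ‖x‖ ^ 2 = ∑ i : Fin 8, x i ^ 2 := by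
      rw [EuclideanSpace.norm_eq, Real.sq_sqrt (by positivity)]
      simp [Real.norm_eq_abs, sq_abs]
    have h4 : ‖x‖ ^ 4 = (∑ i : Fin 8, x i ^ 2) ^ 2 := by rw [← hnorm]; ring
    rw [h4, Fin.sum_univ_castSucc]
    have hlast : (Fin.last 7 : Fin 8) = 7 := rfl
    rw [hlast]
    nlinarith [sq_nonneg ((∑ i : Fin 7, (x i.castSucc) ^ 2) - (x 7)^2)]
  · by_contra h
    push_neg at h
    apply hx
    set s := ∑ i : Fin 7, (x i.castSucc) ^ 2 with hs
    have ht4 : (x 7) ^ 4 = 0 := le_antisymm (by nlinarith [sq_nonneg (x 7 - s)]) (by positivity)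
    have ht : x 7 = 0 := pow_eq_zero_iff (n := 4) (by norm_num) |>.1 ht4
    have hs0 : s = 0 := by nlinarith [sq_nonneg (x 7 - s), ht]
    have hzero : ∀ i : Fin 7, x i.castSucc = 0 := by
      intro i
      have := (Finset.sum_eq_zero_iff_of_nonneg
        (fun j _ => sq_nonneg (x j.castSucc))).1 hs0 i (Finset.mem_univ i)
      exact pow_eq_zero_iff (by norm_num) |>.1 this
    ext i
    refine Fin.lastCases ?_ (fun j => ?_) i
    · have h7 : (Fin.last 7 : Fin 8) = 7 := rfl
      rw [h7]; exact ht
    · exact hzero j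
  · refine eq_top_of_forall_nnreal_le fun r => ?_
    set M : ℝ := max (r:ℝ) 1 with hM
    have hM1 : 1 ≤ M := le_max_right _ _
    have hMr : (r:ℝ) ≤ M := le_max_left _ _
    have hM0 : 0 < M := lt_of_lt_of_le one_pos hM1
    have hε0 : (0:ℝ) < 1/(1000*M) := by positivity
    have hεle : 1/(1000*M) ≤ 1/100 := by
      rw [div_le_div_iff₀ (by positivity) (by norm_num)]
      nlinarith
    refine le_trans ?_ (lower_aux _ hε0 hεle)
    rw [← ENNReal.ofReal_coe_nnreal]
    apply ENNReal.ofReal_le_ofReal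
    have key : 1/((10:ℝ)^12 * (1/(1000*M))^5) = 1000 * M^5 := by
      field_simp
      ring
    rw [key]
    have hM5 : M ≤ M^5 := by
      calc M = M^1 := (pow_one M).symm
        _ ≤ M^5 := pow_le_pow_right₀ hM1 (by norm_num)
    nlinarith
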